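/- arXiv:2205.08235 — 3 statements merged into one kernel-verified Lean document; each statement's English description precedes it below -/
import Mathlib

section
/- Let G be a connected graph with a bridge e = {v1, v2} whose removal yields components G1 (containing v1) and G2 (containing v2). If i and j are both vertices of G1, then the number of 2-tree spanning forests of G separating i and j equals τ_{G2} times the number of 2-tree spanning forests of G1 separating i and j. -/
open SimpleGraph Finset Matrix
open scoped Classical

noncomputable section

/-- Number of spanning trees of `G`. -/
noncomputable def tau {V : Type*} [Fintype V] (G : SimpleGraph V) : ℕ :=
  Set.ncard {H : SimpleGraph V | H ≤ G ∧ H.Connected ∧ H.IsAcyclic}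

/-- Number of 2-tree spanning forests of `G` separating `i` and `j`. -/
noncomputable def twoForest {V : Type*} [Fintype V] (G : SimpleGraph V) (i j : V) : ℕ :=
  Set.ncard {H : SimpleGraph V | H ≤ G ∧ H.IsAcyclic ∧ ¬ H.Reachable i j ∧
    ∀ v, H.Reachable i v ∨ H.Reachable j v}

/-- The four Penrose equations: `B` is the Moore–Penrose inverse of `A`. -/
def IsMoorePenroseInv {n : Type*} [Fintype n] (A B : Matrix n n ℝ) : Prop :=
  A * B * A = A ∧ B * A * B = B ∧ (A * B)ᵀ = A * B ∧ (B * A)ᵀ = B * A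

/-- Laplacian matrix of a graph. -/
noncomputable def lap {V : Type*} [Fintype V] [DecidableEq V] (G : SimpleGraph V) :
    Matrix V V ℝ :=
  fun i j => if i = j then (G.degree i : ℝ) else if G.Adj i j then -1 else 0

/-- Effective resistance computed from a (Moore–Penrose inverse) matrix `Ld`. -/
noncomputable def effRes {V : Type*} [Fintype V] [DecidableEq V] (Ld : Matrix V V ℝ)
    (i j : V) : ℝ :=
  (Pi.single i 1 - Pi.single j 1) ⬝ᵥ Ld.mulVec (Pi.single i 1 - Pi.single j 1)

/-- Transition matrix of the simple random walk on `G`. -/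
noncomputable def transP {V : Type*} [Fintype V] (G : SimpleGraph V) : Matrix V V ℝ :=
  fun i j => if G.Adj i j then (1 : ℝ) / (G.degree i) else 0

/-- Stationary distribution of the simple random walk. -/
noncomputable def statPi {V : Type*} [Fintype V] (G : SimpleGraph V) (i : V) : ℝ :=
  (G.degree i : ℝ) / (2 * G.edgeFinset.card)

/-- `M` is the matrix of mean first passage times of the random walk on `G`. -/
def IsMFPT {V : Type*} [Fintype V] (G : SimpleGraph V) (M : V → V → ℝ) : Prop :=
  (∀ j, M j j = 0) ∧ ∀ i j, i ≠ j → M i j = 1 + ∑ k, transP G i k * M k j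

/-- Kemeny's constant. -/
noncomputable def kemeny {V : Type*} [Fintype V] (G : SimpleGraph V) (M : V → V → ℝ) : ℝ :=
  ∑ i, ∑ j ∈ Finset.univ.filter (· ≠ i), statPi G i * M i j * statPi G j

/-- Accessibility index of vertex `v`. -/
noncomputable def acc {V : Type*} [Fintype V] (G : SimpleGraph V) (M : V → V → ℝ) (v : V) : ℝ :=
  ∑ i ∈ Finset.univ.filter (· ≠ v), statPi G i * M i v

/-- Joining `G1` and `G2` by the bridge `v1 ∼ v2`. -/
def chainTwo {V1 V2 : Type*} (G1 : SimpleGraph V1) (G2 : SimpleGraph V2)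
    (v1 : V1) (v2 : V2) : SimpleGraph (V1 ⊕ V2) where
  Adj p q :=
    match p, q with
    | Sum.inl a, Sum.inl b => G1.Adj a b
    | Sum.inr a, Sum.inr b => G2.Adj a b
    | Sum.inl a, Sum.inr b => a = v1 ∧ b = v2
    | Sum.inr a, Sum.inl b => b = v1 ∧ a = v2
  symm := ⟨by
    rintro (a | a) (b | b) h
    · exact h.symm
    · exact ⟨h.1, h.2⟩
    · exact ⟨h.1, h.2⟩
    · exact h.symm⟩
  loopless := ⟨by
    rintro (a | a) h
    · exact G1.irrefl h
    · exact G2.irrefl h⟩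

end


section AuxBridge

open SimpleGraph

variable {V1 V2 : Type*} {G1 : SimpleGraph V1} {G2 : SimpleGraph V2} {v1 : V1} {v2 : V2}

/-- Hom from the left comap into `H`. -/
def homl (H : SimpleGraph (V1 ⊕ V2)) : (H.comap Sum.inl) →g H := ⟨Sum.inl, fun h => h⟩

/-- Hom from the right comap into `H`. -/
def homr (H : SimpleGraph (V1 ⊕ V2)) : (H.comap Sum.inr) →g H := ⟨Sum.inr, fun h => h⟩

lemma comap_chainTwo_inl : (chainTwo G1 G2 v1 v2).comap Sum.inl = G1 := by
  ext a b; rfl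

lemma comap_chainTwo_inr : (chainTwo G1 G2 v1 v2).comap Sum.inr = G2 := by
  ext a b; rfl

/-- Hom from `G1` into the chain. -/
def chainHoml (G1 : SimpleGraph V1) (G2 : SimpleGraph V2) (v1 : V1) (v2 : V2) :
    G1 →g chainTwo G1 G2 v1 v2 := ⟨Sum.inl, fun h => h⟩

/-- Hom from `G2` into the chain. -/
def chainHomr (G1 : SimpleGraph V1) (G2 : SimpleGraph V2) (v1 : V1) (v2 : V2) :
    G2 →g chainTwo G1 G2 v1 v2 := ⟨Sum.inr, fun h => h⟩

lemma chainTwo_mono {F : SimpleGraph V1} {T : SimpleGraph V2} (hF : F ≤ G1) (hT : T ≤ G2) :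
    chainTwo F T v1 v2 ≤ chainTwo G1 G2 v1 v2 := by
  rintro (a | a) (b | b) h
  · exact hF h
  · exact h
  · exact h
  · exact hT h

/-- The target predicate of the reachability lemma. -/
def sideProp (H : SimpleGraph (V1 ⊕ V2)) (v1 : V1) (v2 : V2) :
    V1 ⊕ V2 → V1 ⊕ V2 → Prop
  | Sum.inl a, Sum.inl b => (H.comap Sum.inl).Reachable a b
  | Sum.inr a, Sum.inr b => (H.comap Sum.inr).Reachable a b
  | Sum.inl a, Sum.inr b => (H.comap Sum.inl).Reachable a v1 ∧
      (H.comap Sum.inr).Reachable v2 b ∧ H.Adj (Sum.inl v1) (Sum.inr v2)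
  | Sum.inr a, Sum.inl b => (H.comap Sum.inr).Reachable a v2 ∧
      (H.comap Sum.inl).Reachable v1 b ∧ H.Adj (Sum.inl v1) (Sum.inr v2)

lemma key_walk {H : SimpleGraph (V1 ⊕ V2)} (hle : H ≤ chainTwo G1 G2 v1 v2)
    {x y : V1 ⊕ V2} (p : H.Walk x y) : sideProp H v1 v2 x y := by
  induction p with
  | nil =>
    rename_i u; rcases u with a | a
    · exact Reachable.refl a
    · exact Reachable.refl a
  | @cons u v w h p ih =>
    rcases u with a | a <;> rcases v with c | c
    · rcases w with b | b
      · exact ((Adj.reachable (by exact h : (H.comap Sum.inl).Adj a c))).trans ih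
      · exact ⟨(Adj.reachable (by exact h : (H.comap Sum.inl).Adj a c)).trans ih.1, ih.2.1, ih.2.2⟩
    · obtain ⟨rfl, rfl⟩ : a = v1 ∧ c = v2 := hle h
      rcases w with b | b
      · exact ih.2.1
      · exact ⟨Reachable.refl _, ih, h⟩
    · obtain ⟨rfl, rfl⟩ : c = v1 ∧ a = v2 := hle h
      rcases w with b | b
      · exact ⟨Reachable.refl _, ih, h.symm⟩
      · exact ih.2.1
    · rcases w with b | b
      · exact ⟨(Adj.reachable (by exact h : (H.comap Sum.inr).Adj a c)).trans ih.1, ih.2.1, ih.2.2⟩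
      · exact (Adj.reachable (by exact h : (H.comap Sum.inr).Adj a c)).trans ih

/-- The target predicate of the lifting lemma. -/
def liftProp (H : SimpleGraph (V1 ⊕ V2)) :
    ∀ (x y : V1 ⊕ V2), H.Walk x y → Prop
  | Sum.inl a, Sum.inl b, p => ∃ q : (H.comap Sum.inl).Walk a b, p = q.map (homl H)
  | Sum.inr a, Sum.inr b, p => ∃ q : (H.comap Sum.inr).Walk a b, p = q.map (homr H)
  | Sum.inl _, Sum.inr _, _ => False
  | Sum.inr _, Sum.inl _, _ => False

lemma lift_walk {H : SimpleGraph (V1 ⊕ V2)} (hle : H ≤ chainTwo G1 G2 v1 v2)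
    {x y : V1 ⊕ V2} (p : H.Walk x y)
    (he : s(Sum.inl v1, Sum.inr v2) ∉ p.edges) : liftProp H x y p := by
  induction p with
  | nil =>
    rename_i u; rcases u with a | a
    · exact ⟨Walk.nil, rfl⟩
    · exact ⟨Walk.nil, rfl⟩
  | @cons u v w h p ih =>
    rw [Walk.edges_cons, List.mem_cons] at he
    push_neg at he
    obtain ⟨hne, he2⟩ := he
    have ih := ih he2
    rcases u with a | a <;> rcases v with c | c
    · rcases w with b | b
      · obtain ⟨q, rfl⟩ := ih
        exact ⟨Walk.cons (by exact h) q, by rfl⟩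
      · exact ih.elim
    · obtain ⟨rfl, rfl⟩ : a = v1 ∧ c = v2 := hle h
      exact absurd rfl hne
    · obtain ⟨rfl, rfl⟩ : c = v1 ∧ a = v2 := hle h
      exact absurd (Sym2.eq_swap) hne
    · rcases w with b | b
      · exact ih.elim
      · obtain ⟨q, rfl⟩ := ih
        exact ⟨Walk.cons (by exact h) q, by rfl⟩

/-- The bridge edge of a subgraph of a chain containing it is a bridge. -/
lemma isBridge_of_le {H : SimpleGraph (V1 ⊕ V2)} (hle : H ≤ chainTwo G1 G2 v1 v2)
    (hadj : H.Adj (Sum.inl v1) (Sum.inr v2)) :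
    H.IsBridge s(Sum.inl v1, Sum.inr v2) := by
  rw [isBridge_iff_adj_and_forall_walk_mem_edges]
  intro p
  by_contra he
  exact lift_walk hle p he

/-- Acyclicity of a subgraph of a chain. -/
lemma acyclic_of_le {H : SimpleGraph (V1 ⊕ V2)} (hle : H ≤ chainTwo G1 G2 v1 v2)
    (hA1 : (H.comap Sum.inl).IsAcyclic) (hA2 : (H.comap Sum.inr).IsAcyclic) :
    H.IsAcyclic := by
  intro x c hc
  have hbe : s(Sum.inl v1, Sum.inr v2) ∉ c.edges := by
    by_cases hadj : H.Adj (Sum.inl v1) (Sum.inr v2)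
    · exact (isBridge_of_le hle hadj).notMem_edges_of_isCycle hc
    · intro hmem
      exact hadj (Walk.adj_of_mem_edges c hmem)
  have hl := lift_walk hle c hbe
  rcases x with a | a
  · obtain ⟨q, rfl⟩ := hl
    exact hA1 q ((Walk.map_isCycle_iff_of_injective Sum.inl_injective).mp hc)
  · obtain ⟨q, rfl⟩ := hl
    exact hA2 q ((Walk.map_isCycle_iff_of_injective Sum.inr_injective).mp hc)

end AuxBridge

/-- if `i, j ∈ V(G1)`, the number of 2-tree spanning forests of `G`
separating `i` and `j` equals `τ_{G2} · f^{G1}_{i,j}`. -/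
theorem twoForest_chainTwo_left {V1 V2 : Type*} [Fintype V1] [Fintype V2]
    (G1 : SimpleGraph V1) (G2 : SimpleGraph V2) (v1 : V1) (v2 : V2)
    (h1 : G1.Connected) (h2 : G2.Connected) (i j : V1) :
    twoForest (chainTwo G1 G2 v1 v2) (Sum.inl i) (Sum.inl j) =
      tau G2 * twoForest G1 i j := by
  classical
  let A : Set (SimpleGraph V2) := {T | T ≤ G2 ∧ T.Connected ∧ T.IsAcyclic}
  let B : Set (SimpleGraph V1) := {F | F ≤ G1 ∧ F.IsAcyclic ∧ ¬ F.Reachable i j ∧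
    ∀ v, F.Reachable i v ∨ F.Reachable j v}
  let Φ : SimpleGraph V2 × SimpleGraph V1 → SimpleGraph (V1 ⊕ V2) :=
    fun p => chainTwo p.2 p.1 v1 v2
  have hΦinv : ∀ p : SimpleGraph V2 × SimpleGraph V1,
      ((Φ p).comap Sum.inr, (Φ p).comap Sum.inl) = p := by
    intro p
    simp only [Φ, comap_chainTwo_inl, comap_chainTwo_inr]
  have hΦinj : Function.Injective Φ := by
    intro p q h
    rw [← hΦinv p, ← hΦinv q, h]
  have hset : {H : SimpleGraph (V1 ⊕ V2) | H ≤ chainTwo G1 G2 v1 v2 ∧ H.IsAcyclic ∧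
      ¬ H.Reachable (Sum.inl i) (Sum.inl j) ∧
      ∀ v, H.Reachable (Sum.inl i) v ∨ H.Reachable (Sum.inl j) v} = Φ '' (A ×ˢ B) := by
    ext H
    constructor
    · rintro ⟨hle, hac, hnr, hall⟩
      have hbr : H.Adj (Sum.inl v1) (Sum.inr v2) := by
        rcases hall (Sum.inr v2) with h | h
        · exact h.elim fun p => (key_walk hle p).2.2
        · exact h.elim fun p => (key_walk hle p).2.2
      have hreachr : ∀ a : V2, (H.comap Sum.inr).Reachable v2 a := by
        intro a
        rcases hall (Sum.inr a) with h | h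
        · exact h.elim fun p => (key_walk hle p).2.1
        · exact h.elim fun p => (key_walk hle p).2.1
      refine ⟨(H.comap Sum.inr, H.comap Sum.inl), Set.mem_prod.mpr ⟨?_, ?_⟩, ?_⟩
      · refine ⟨fun _ _ h => hle h, ?_, ?_⟩
        · haveI : Nonempty V2 := ⟨v2⟩
          exact ⟨fun a b => (hreachr a).symm.trans (hreachr b)⟩
        · intro a c hc
          exact hac (c.map (homr H)) (hc.map Sum.inr_injective)
      · refine ⟨fun _ _ h => hle h, ?_, ?_, ?_⟩
        · intro a c hc
          exact hac (c.map (homl H)) (hc.map Sum.inl_injective)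
        · intro hr
          exact hnr (hr.map (homl H))
        · intro v
          rcases hall (Sum.inl v) with h | h
          · exact Or.inl (h.elim fun p => (key_walk hle p : (H.comap Sum.inl).Reachable i v))
          · exact Or.inr (h.elim fun p => (key_walk hle p : (H.comap Sum.inl).Reachable j v))
      · show chainTwo (H.comap Sum.inl) (H.comap Sum.inr) v1 v2 = H
        ext x y
        rcases x with a | a <;> rcases y with b | b
        · exact Iff.rfl
        · constructor
          · rintro ⟨rfl, rfl⟩
            exact hbr
          · intro h
            exact hle h
        · constructor
          · rintro ⟨rfl, rfl⟩
            exact hbr.symm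
          · intro h
            exact hle h
        · exact Iff.rfl
    · rintro ⟨⟨T, F⟩, ⟨⟨hT, hTc, hTa⟩, ⟨hF, hFa, hFr, hFall⟩⟩, rfl⟩
      have hle : chainTwo F T v1 v2 ≤ chainTwo G1 G2 v1 v2 := chainTwo_mono hF hT
      have hbr : (chainTwo F T v1 v2).Adj (Sum.inl v1) (Sum.inr v2) := ⟨rfl, rfl⟩
      refine ⟨hle, ?_, ?_, ?_⟩
      · refine acyclic_of_le (le_refl (chainTwo F T v1 v2)) ?_ ?_
        · rw [comap_chainTwo_inl]; exact hFa
        · rw [comap_chainTwo_inr]; exact hTa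
      · rintro ⟨p⟩
        have hkey : ((chainTwo F T v1 v2).comap Sum.inl).Reachable i j :=
          key_walk (le_refl (chainTwo F T v1 v2)) p
        rw [comap_chainTwo_inl] at hkey
        exact hFr hkey
      · rintro (a | a)
        · exact (hFall a).imp (fun h => h.map (chainHoml F T v1 v2))
            (fun h => h.map (chainHoml F T v1 v2))
        · have hta : (chainTwo F T v1 v2).Reachable (Sum.inr v2) (Sum.inr a) :=
            (hTc.preconnected v2 a).map (chainHomr F T v1 v2)
          refine (hFall v1).imp (fun h => ?_) (fun h => ?_)
          · exact ((h.map (chainHoml F T v1 v2)).trans hbr.reachable).trans hta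
          · exact ((h.map (chainHoml F T v1 v2)).trans hbr.reachable).trans hta
  show Set.ncard _ = Set.ncard _ * Set.ncard _
  rw [hset, Set.ncard_image_of_injective _ hΦinj]
  calc (A ×ˢ B).ncard = Nat.card ↥(A ×ˢ B) := (Nat.card_coe_set_eq _).symm
    _ = Nat.card (↥A × ↥B) := Nat.card_congr (Equiv.Set.prod A B)
    _ = Nat.card ↥A * Nat.card ↥B := Nat.card_prod _ _
    _ = A.ncard * B.ncard := by rw [Nat.card_coe_set_eq, Nat.card_coe_set_eq]
end

section
/- For n ≥ 4, among all trees T on n vertices, the quantity C(T) := Σ_{edges {x,y} of T} |V(T_x)|·|V(T_y)| (where T_x, T_y are the components of T minus the edge {x,y} containing x and y respectively) is minimized exactly when T is a star K_{1,n−1}. -/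
open SimpleGraph Finset
open scoped Classical

/-- Number of vertices of the component containing `x` after deleting the edge `{x,y}`. -/
noncomputable def compSize {V : Type*} [Fintype V] (T : SimpleGraph V) (x y : V) : ℕ :=
  (((T.deleteEdges {s(x, y)}).connectedComponentMk x).supp).ncard

/-- `C(T) = ∑_{edges {x,y}} |V(T_x)|·|V(T_y)|` (each unordered edge counted once). -/
noncomputable def Cval {V : Type*} [Fintype V] (T : SimpleGraph V) : ℕ :=
  (∑ x, ∑ y, if T.Adj x y then compSize T x y * compSize T y x else 0) / 2

/-- `T` is a star with centre `c`. -/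
def IsStarAt {V : Type*} (T : SimpleGraph V) (c : V) : Prop :=
  ∀ x y, T.Adj x y ↔ (x = c ∧ y ≠ c) ∨ (y = c ∧ x ≠ c)

section Aux

set_option linter.unusedSectionVars false

variable {V : Type*} [Fintype V]

lemma eq_of_reachable_isolated {G : SimpleGraph V} {x v : V} (hx : ∀ z, ¬ G.Adj x z)
    (h : G.Reachable x v) : x = v := by
  obtain ⟨p⟩ := h
  cases p with
  | nil => rfl
  | cons h q => exact absurd h (hx _)

lemma supp_isolated {G : SimpleGraph V} {x : V} (hx : ∀ z, ¬ G.Adj x z) :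
    (G.connectedComponentMk x).supp = {x} := by
  ext v
  simp only [ConnectedComponent.mem_supp_iff, ConnectedComponent.eq, Set.mem_singleton_iff]
  exact ⟨fun h => (eq_of_reachable_isolated hx h.symm).symm, fun h => h ▸ Reachable.refl _⟩

lemma one_le_compSize (T : SimpleGraph V) (x y : V) : 1 ≤ compSize T x y := by
  have hx : x ∈ ((T.deleteEdges {s(x, y)}).connectedComponentMk x).supp := rfl
  have := Set.ncard_pos (s := ((T.deleteEdges {s(x, y)}).connectedComponentMk x).supp)
    (Set.toFinite _)
  exact this.mpr ⟨x, hx⟩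

lemma compSize_eq_one {T : SimpleGraph V} {x y : V} (h : ∀ z, T.Adj x z → z = y) :
    compSize T x y = 1 := by
  have hx : ∀ z, ¬ (T.deleteEdges {s(x, y)}).Adj x z := by
    intro z hz
    rw [deleteEdges_adj] at hz
    exact hz.2 (by rw [h z hz.1]; rfl)
  rw [compSize, supp_isolated hx, Set.ncard_singleton]

lemma two_le_compSize {T : SimpleGraph V} {x y z : V} (hz : T.Adj x z) (hzy : z ≠ y) :
    2 ≤ compSize T x y := by
  have hadj : (T.deleteEdges {s(x, y)}).Adj x z := by
    rw [deleteEdges_adj]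
    refine ⟨hz, ?_⟩
    simp only [Set.mem_singleton_iff, Sym2.eq, Sym2.rel_iff', Prod.mk.injEq, Prod.swap_prod_mk]
    rintro (⟨-, rfl⟩ | ⟨rfl, rfl⟩)
    · exact hzy rfl
    · exact hz.ne rfl
  have hxm : x ∈ ((T.deleteEdges {s(x, y)}).connectedComponentMk x).supp := rfl
  have hzm : z ∈ ((T.deleteEdges {s(x, y)}).connectedComponentMk x).supp := by
    simp only [ConnectedComponent.mem_supp_iff, ConnectedComponent.eq]
    exact hadj.symm.reachable
  exact (Set.one_lt_ncard (Set.toFinite _)).mpr ⟨x, hxm, z, hzm, hz.ne⟩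

lemma walk_delete_aux {T : SimpleGraph V} {x y : V} {a c : V} (p : T.Walk a c) :
    (T.deleteEdges {s(x, y)}).Reachable a c ∨
      (((T.deleteEdges {s(x, y)}).Reachable a x ∨ (T.deleteEdges {s(x, y)}).Reachable a y) ∧
       ((T.deleteEdges {s(x, y)}).Reachable c x ∨ (T.deleteEdges {s(x, y)}).Reachable c y)) := by
  set G := T.deleteEdges {s(x, y)}
  induction p with
  | nil => exact Or.inl (Reachable.refl _)
  | @cons a b c hab p ih =>
    by_cases he : s(a, b) = s(x, y)
    · have hmem : (G.Reachable a x ∨ G.Reachable a y) ∧ (G.Reachable b x ∨ G.Reachable b y) := by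
        rw [Sym2.eq, Sym2.rel_iff', Prod.mk.injEq, Prod.swap_prod_mk] at he
        rcases he with ⟨rfl, rfl⟩ | ⟨rfl, rfl⟩
        · exact ⟨Or.inl (Reachable.refl _), Or.inr (Reachable.refl _)⟩
        · exact ⟨Or.inr (Reachable.refl _), Or.inl (Reachable.refl _)⟩
      refine Or.inr ⟨hmem.1, ?_⟩
      rcases ih with h | h
      · rcases hmem.2 with hb | hb
        · exact Or.inl (h.symm.trans hb)
        · exact Or.inr (h.symm.trans hb)
      · exact h.2
    · have hadj : G.Adj a b := by
        rw [deleteEdges_adj]; exact ⟨hab, by simpa using he⟩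
      rcases ih with h | h
      · exact Or.inl (hadj.reachable.trans h)
      · refine Or.inr ⟨?_, h.2⟩
        rcases h.1 with hb | hb
        · exact Or.inl (hadj.reachable.trans hb)
        · exact Or.inr (hadj.reachable.trans hb)

lemma reachable_or_of_walk {T : SimpleGraph V} {x y v : V} (p : T.Walk v x) :
    (T.deleteEdges {s(x, y)}).Reachable v x ∨ (T.deleteEdges {s(x, y)}).Reachable v y := by
  rcases walk_delete_aux (x := x) (y := y) p with h | h
  · exact Or.inl h
  · exact h.1

/-- Bridge split: in a tree, deleting an edge splits `V` into the two components. -/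
lemma compSize_add_compSize {T : SimpleGraph V} (hT : T.IsTree) {x y : V} (hxy : T.Adj x y) :
    compSize T x y + compSize T y x = Fintype.card V := by
  set G := T.deleteEdges {s(x, y)} with hG
  have hGyx : T.deleteEdges {s(y, x)} = G := by rw [hG, Sym2.eq_swap]
  have hbr : T.IsBridge s(x, y) := isAcyclic_iff_forall_adj_isBridge.mp hT.IsAcyclic hxy
  have hnr : ¬ G.Reachable x y := hbr
  have hne : G.connectedComponentMk x ≠ G.connectedComponentMk y := by
    rw [Ne, ConnectedComponent.eq]; exact hnr
  have hdisj : Disjoint (G.connectedComponentMk x).supp (G.connectedComponentMk y).supp :=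
    pairwise_disjoint_supp_connectedComponent _ hne
  have hunion : (G.connectedComponentMk x).supp ∪ (G.connectedComponentMk y).supp = Set.univ := by
    ext v
    simp only [Set.mem_union, ConnectedComponent.mem_supp_iff, ConnectedComponent.eq,
      Set.mem_univ, iff_true]
    obtain ⟨p⟩ := hT.isConnected.preconnected v x
    exact reachable_or_of_walk p
  have := Set.ncard_union_eq hdisj (Set.toFinite _) (Set.toFinite _)
  rw [hunion, Set.ncard_univ, Nat.card_eq_fintype_card] at this
  rw [compSize, compSize, hGyx, ← hG, this]

lemma sum_ite_adj (G : SimpleGraph V) :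
    (∑ x, ∑ y, if G.Adj x y then 1 else 0) = 2 * G.edgeFinset.card := by
  rw [← sum_degrees_eq_twice_card_edges]
  refine Finset.sum_congr rfl fun x _ => ?_
  rw [SimpleGraph.degree, neighborFinset_eq_filter, Finset.card_filter]

lemma tree_sum_ite_adj {G : SimpleGraph V} (hG : G.IsTree) :
    (∑ x, ∑ y, if G.Adj x y then 1 else 0) = 2 * (Fintype.card V - 1) := by
  rw [sum_ite_adj, ← hG.card_edgeFinset]
  omega

/-- A leaf of a star is isolated after deleting its edge. -/
lemma star_leaf_isolated {G : SimpleGraph V} {c x : V} (hs : IsStarAt G c) (hx : x ≠ c) :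
    ∀ z, ¬ (G.deleteEdges {s(x, c)}).Adj x z := by
  intro z hz
  rw [deleteEdges_adj] at hz
  have : z = c := by
    rcases (hs x z).mp hz.1 with ⟨h1, _⟩ | ⟨h1, _⟩
    · exact absurd h1 hx
    · exact h1
  exact hz.2 (by rw [this]; rfl)

lemma star_connected {G : SimpleGraph V} {c : V} (hs : IsStarAt G c) [Nonempty V] :
    G.Connected := by
  have hreach : ∀ v, G.Reachable v c := by
    intro v
    by_cases hv : v = c
    · exact hv ▸ Reachable.refl _
    · exact (Adj.reachable ((hs v c).mpr (Or.inr ⟨rfl, hv⟩)))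
  exact Connected.mk fun u v => (hreach u).trans (hreach v).symm

lemma star_isTree {G : SimpleGraph V} {c : V} (hs : IsStarAt G c) [Nonempty V] :
    G.IsTree := by
  refine ⟨star_connected hs, ?_⟩
  rw [isAcyclic_iff_forall_adj_isBridge]
  intro v w hvw
  rcases (hs v w).mp hvw with ⟨rfl, hw⟩ | ⟨rfl, hv⟩
  · intro hr
    have hiso := star_leaf_isolated hs hw (x := w)
    rw [Sym2.eq_swap] at hiso
    exact hw (eq_of_reachable_isolated (G := G.deleteEdges {s(v, w)}) hiso hr.symm)
  · intro hr
    have hiso := star_leaf_isolated hs hv (x := v) (c := w)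
    exact hv (eq_of_reachable_isolated (G := G.deleteEdges {s(v, w)}) hiso hr)

/-- In a tree which is a star, every edge term equals `|V| - 1`. -/
lemma star_term {G : SimpleGraph V} {c : V} (hG : G.IsTree) (hs : IsStarAt G c)
    {x y : V} (hxy : G.Adj x y) :
    compSize G x y * compSize G y x = Fintype.card V - 1 := by
  have hsplit := compSize_add_compSize hG hxy
  rcases (hs x y).mp hxy with ⟨rfl, hy⟩ | ⟨rfl, hx⟩
  · have h1 : compSize G y x = 1 := by
      refine compSize_eq_one fun z hz => ?_
      rcases (hs y z).mp hz with ⟨h1, _⟩ | ⟨h1, _⟩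
      · exact absurd h1 hy
      · exact h1
    rw [h1] at hsplit ⊢
    omega
  · have h1 : compSize G x y = 1 := by
      refine compSize_eq_one fun z hz => ?_
      rcases (hs x z).mp hz with ⟨h1, _⟩ | ⟨h1, _⟩
      · exact absurd h1 hx
      · exact h1
    rw [h1] at hsplit ⊢
    omega

/-- The value of `C` on a star tree. -/
lemma Cval_star {G : SimpleGraph V} {c : V} (hG : G.IsTree) (hs : IsStarAt G c) :
    Cval G = (Fintype.card V - 1) * (Fintype.card V - 1) := by
  rw [Cval]
  have : (∑ x, ∑ y, if G.Adj x y then compSize G x y * compSize G y x else 0)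
      = (∑ x, ∑ y, if G.Adj x y then (Fintype.card V - 1) else 0) := by
    refine Finset.sum_congr rfl fun x _ => Finset.sum_congr rfl fun y _ => ?_
    by_cases h : G.Adj x y
    · rw [if_pos h, if_pos h, star_term hG hs h]
    · rw [if_neg h, if_neg h]
  rw [this]
  have h2 : (∑ x, ∑ y, if G.Adj x y then (Fintype.card V - 1) else 0)
      = (Fintype.card V - 1) * (∑ x, ∑ y, if G.Adj x y then 1 else 0) := by
    rw [Finset.mul_sum]
    refine Finset.sum_congr rfl fun x _ => ?_
    rw [Finset.mul_sum]
    refine Finset.sum_congr rfl fun y _ => ?_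
    by_cases h : G.Adj x y <;> simp [h]
  rw [h2, tree_sum_ite_adj hG, show (Fintype.card V - 1) * (2 * (Fintype.card V - 1))
      = 2 * ((Fintype.card V - 1) * (Fintype.card V - 1)) by ring, Nat.mul_div_cancel_left _ two_pos]

/-- Lower bound: every tree satisfies `Cval ≥ (n-1)^2`. -/
lemma Cval_lower {G : SimpleGraph V} (hG : G.IsTree) :
    (Fintype.card V - 1) * (Fintype.card V - 1) ≤ Cval G := by
  have hterm : ∀ x y, (if G.Adj x y then (Fintype.card V - 1) else 0)
      ≤ (if G.Adj x y then compSize G x y * compSize G y x else 0) := by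
    intro x y
    by_cases h : G.Adj x y
    · rw [if_pos h, if_pos h]
      have hsplit := compSize_add_compSize hG h
      obtain ⟨a, ha⟩ : ∃ a, compSize G x y = a + 1 :=
        ⟨compSize G x y - 1, by have := one_le_compSize G x y; omega⟩
      obtain ⟨b, hb⟩ : ∃ b, compSize G y x = b + 1 :=
        ⟨compSize G y x - 1, by have := one_le_compSize G y x; omega⟩
      rw [ha, hb] at hsplit ⊢
      have : (a + 1) * (b + 1) = a * b + a + b + 1 := by ring
      omega
    · simp [h]
  have hsum : (∑ x, ∑ y, if G.Adj x y then (Fintype.card V - 1) else 0)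
      ≤ (∑ x, ∑ y, if G.Adj x y then compSize G x y * compSize G y x else 0) :=
    Finset.sum_le_sum fun x _ => Finset.sum_le_sum fun y _ => hterm x y
  have h2 : (∑ x, ∑ y, if G.Adj x y then (Fintype.card V - 1) else 0)
      = 2 * ((Fintype.card V - 1) * (Fintype.card V - 1)) := by
    have : (∑ x, ∑ y, if G.Adj x y then (Fintype.card V - 1) else 0)
        = (Fintype.card V - 1) * (∑ x, ∑ y, if G.Adj x y then 1 else 0) := by
      rw [Finset.mul_sum]
      refine Finset.sum_congr rfl fun x _ => ?_
      rw [Finset.mul_sum]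
      refine Finset.sum_congr rfl fun y _ => ?_
      by_cases h : G.Adj x y <;> simp [h]
    rw [this, tree_sum_ite_adj hG]; ring
  rw [Cval]
  calc (Fintype.card V - 1) * (Fintype.card V - 1)
      = 2 * ((Fintype.card V - 1) * (Fintype.card V - 1)) / 2 := by omega
    _ ≤ _ := Nat.div_le_div_right (h2 ▸ hsum)

end Aux

section Aux2
set_option linter.unusedSectionVars false
variable {V : Type*} [Fintype V]

lemma only_neighbor_of_compSize_eq_one {G : SimpleGraph V} {x y : V}
    (h : compSize G x y = 1) : ∀ z, G.Adj x z → z = y := by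
  intro z hz
  by_contra hzy
  have := two_le_compSize hz hzy
  omega

/-- In a connected graph on ≥ 3 vertices, some vertex has two distinct neighbours. -/
lemma exists_two_neighbors {G : SimpleGraph V} (hG : G.IsTree) (hcard : 3 ≤ Fintype.card V) :
    ∃ c z₁ z₂, G.Adj c z₁ ∧ G.Adj c z₂ ∧ z₁ ≠ z₂ := by
  by_contra hcon
  push_neg at hcon
  have hbound : ∀ x : V, (∑ y, if G.Adj x y then 1 else 0) ≤ 1 := by
    intro x
    by_cases hx : ∃ z, G.Adj x z
    · obtain ⟨z, hz⟩ := hx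
      calc (∑ y, if G.Adj x y then 1 else 0) ≤ ∑ y, if y = z then 1 else 0 := by
            refine Finset.sum_le_sum fun y _ => ?_
            by_cases h : G.Adj x y
            · rw [if_pos h, if_pos (hcon x y z h hz)]
            · simp [h]
        _ = 1 := by rw [Finset.sum_ite_eq' Finset.univ z (fun _ => 1)]; simp
    · push_neg at hx
      simp [hx]
  have h1 : (∑ x, ∑ y, if G.Adj x y then 1 else 0) ≤ Fintype.card V := by
    calc (∑ x, ∑ y, if G.Adj x y then 1 else 0) ≤ ∑ _x : V, 1 :=
          Finset.sum_le_sum fun x _ => hbound x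
      _ = Fintype.card V := by simp
  rw [tree_sum_ite_adj hG] at h1
  omega

/-- A tree which is not a star has an edge with both sides of size at least 2. -/
lemma exists_heavy_edge {G : SimpleGraph V} (hG : G.IsTree) (hcard : 3 ≤ Fintype.card V)
    (hns : ¬ ∃ c, IsStarAt G c) :
    ∃ x y, G.Adj x y ∧ 2 ≤ compSize G x y ∧ 2 ≤ compSize G y x := by
  by_contra hcon
  push_neg at hcon
  apply hns
  -- every edge has a side of size one
  have hdeg : ∀ x y, G.Adj x y → compSize G x y = 1 ∨ compSize G y x = 1 := by
    intro x y hxy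
    have h1 := one_le_compSize G x y
    have h2 := one_le_compSize G y x
    have := hcon x y hxy
    omega
  obtain ⟨c, z₁, z₂, hz₁, hz₂, hne⟩ := exists_two_neighbors hG hcard
  -- every neighbour of c has c as its only neighbour
  have honly : ∀ w, G.Adj c w → ∀ z, G.Adj w z → z = c := by
    intro w hw
    rcases hdeg c w hw with h | h
    · exfalso
      have e1 := only_neighbor_of_compSize_eq_one h z₁ hz₁
      have e2 := only_neighbor_of_compSize_eq_one h z₂ hz₂
      exact hne (e1.trans e2.symm)
    · exact only_neighbor_of_compSize_eq_one h
  -- every vertex other than c is adjacent to c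
  have hadjall : ∀ v, v ≠ c → G.Adj c v := by
    intro v hv
    obtain ⟨p, hp, -⟩ := hG.existsUnique_path c v
    cases p with
    | nil => exact absurd rfl (Ne.symm hv)
    | @cons _ w _ h q =>
      have hq := (SimpleGraph.Walk.cons_isPath_iff h q).mp hp
      cases q with
      | nil => exact h
      | @cons _ u _ h' q' =>
        exfalso
        have huc : u = c := honly w h u h'
        apply hq.2
        rw [SimpleGraph.Walk.support_cons]
        exact List.mem_cons_of_mem _ (huc ▸ q'.start_mem_support)
  refine ⟨c, fun x y => ?_⟩
  constructor
  · intro hxy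
    by_cases hx : x = c
    · refine Or.inl ⟨hx, fun hy => ?_⟩
      rw [hx, hy] at hxy
      exact G.loopless.irrefl c hxy
    · refine Or.inr ⟨?_, hx⟩
      have := honly x (hadjall x hx) y hxy
      exact this
  · rintro (⟨rfl, hy⟩ | ⟨rfl, hx⟩)
    · exact (hadjall y hy)
    · exact (hadjall x hx).symm

/-- Strict lower bound for non-star trees. -/
lemma Cval_strict {G : SimpleGraph V} (hG : G.IsTree) (hcard : 4 ≤ Fintype.card V)
    {x₀ y₀ : V} (hxy : G.Adj x₀ y₀) (ha : 2 ≤ compSize G x₀ y₀) (hb : 2 ≤ compSize G y₀ x₀) :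
    (Fintype.card V - 1) * (Fintype.card V - 1) + 1 ≤ Cval G := by
  classical
  set n := Fintype.card V with hn
  set g : V × V → ℕ := fun p => if G.Adj p.1 p.2 then compSize G p.1 p.2 * compSize G p.2 p.1 else 0
    with hg
  set h : V × V → ℕ := fun p => if G.Adj p.1 p.2 then n - 1 else 0 with hh
  have hle : ∀ p : V × V, h p ≤ g p := by
    rintro ⟨x, y⟩
    by_cases hadj : G.Adj x y
    · simp only [hg, hh, if_pos hadj]
      have hsplit := compSize_add_compSize hG hadj
      obtain ⟨a, ha'⟩ : ∃ a, compSize G x y = a + 1 :=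
        ⟨compSize G x y - 1, by have := one_le_compSize G x y; omega⟩
      obtain ⟨b, hb'⟩ : ∃ b, compSize G y x = b + 1 :=
        ⟨compSize G y x - 1, by have := one_le_compSize G y x; omega⟩
      rw [ha', hb'] at hsplit ⊢
      have : (a + 1) * (b + 1) = a * b + a + b + 1 := by ring
      omega
    · simp [hg, hh, hadj]
  have hsum_eq : (∑ x, ∑ y, if G.Adj x y then compSize G x y * compSize G y x else 0)
      = ∑ p ∈ Finset.univ ×ˢ Finset.univ, g p := by
    rw [Finset.sum_product]
  have hsplit_sum : (∑ p ∈ Finset.univ ×ˢ Finset.univ, g p)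
      = (∑ p ∈ Finset.univ ×ˢ Finset.univ, h p)
        + ∑ p ∈ Finset.univ ×ˢ Finset.univ, (g p - h p) := by
    rw [← Finset.sum_add_distrib]
    refine Finset.sum_congr rfl fun p _ => ?_
    have := hle p
    omega
  have hsumh : (∑ p ∈ Finset.univ ×ˢ Finset.univ, h p) = 2 * ((n - 1) * (n - 1)) := by
    rw [Finset.sum_product]
    have : (∑ x, ∑ y, h (x, y)) = (n - 1) * (∑ x, ∑ y, if G.Adj x y then 1 else 0) := by
      rw [Finset.mul_sum]
      refine Finset.sum_congr rfl fun x _ => ?_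
      rw [Finset.mul_sum]
      refine Finset.sum_congr rfl fun y _ => ?_
      by_cases hadj : G.Adj x y <;> simp [hh, hadj]
    rw [this, tree_sum_ite_adj hG, ← hn]; ring
  have hpairne : (x₀, y₀) ≠ (y₀, x₀) := by
    intro hcon
    exact hxy.ne (congrArg Prod.fst hcon)
  have hextra : 2 ≤ ∑ p ∈ Finset.univ ×ˢ Finset.univ, (g p - h p) := by
    have hsub : ({(x₀, y₀), (y₀, x₀)} : Finset (V × V)) ⊆ Finset.univ ×ˢ Finset.univ := by
      intro p _; simp
    have hterm : ∀ x y, G.Adj x y → 2 ≤ compSize G x y → 2 ≤ compSize G y x →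
        1 ≤ g (x, y) - h (x, y) := by
      intro x y hadj h2a h2b
      simp only [hg, hh, if_pos hadj]
      have hsplit := compSize_add_compSize hG hadj
      obtain ⟨a, ha'⟩ : ∃ a, compSize G x y = a + 2 := ⟨compSize G x y - 2, by omega⟩
      obtain ⟨b, hb'⟩ : ∃ b, compSize G y x = b + 2 := ⟨compSize G y x - 2, by omega⟩
      rw [ha', hb'] at hsplit ⊢
      have : (a + 2) * (b + 2) = a * b + 2 * a + 2 * b + 4 := by ring
      omega
    calc (2 : ℕ) = 1 + 1 := rfl
      _ ≤ (g (x₀, y₀) - h (x₀, y₀)) + (g (y₀, x₀) - h (y₀, x₀)) :=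
          Nat.add_le_add (hterm x₀ y₀ hxy ha hb) (hterm y₀ x₀ hxy.symm hb ha)
      _ = ∑ p ∈ ({(x₀, y₀), (y₀, x₀)} : Finset (V × V)), (g p - h p) :=
          (Finset.sum_pair (f := fun p => g p - h p) hpairne).symm
      _ ≤ _ := Finset.sum_le_sum_of_subset hsub
  have htotal : 2 * ((n - 1) * (n - 1) + 1)
      ≤ (∑ x, ∑ y, if G.Adj x y then compSize G x y * compSize G y x else 0) := by
    rw [hsum_eq, hsplit_sum, hsumh]
    omega
  calc (n - 1) * (n - 1) + 1 = 2 * ((n - 1) * (n - 1) + 1) / 2 := by omega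
    _ ≤ _ := Nat.div_le_div_right htotal

end Aux2

/-- for `n ≥ 4`, among trees on `n` vertices, `C(T)` is minimized
exactly when `T` is a star. -/
theorem Cval_min_iff_star {n : ℕ} (hn : 4 ≤ n) (T : SimpleGraph (Fin n))
    (hT : T.IsTree) :
    (∀ S : SimpleGraph (Fin n), S.IsTree → Cval T ≤ Cval S) ↔ ∃ c, IsStarAt T c := by
  have hcard : Fintype.card (Fin n) = n := Fintype.card_fin n
  haveI : Nonempty (Fin n) := ⟨⟨0, by omega⟩⟩
  constructor
  · intro hmin
    by_contra hns
    obtain ⟨x₀, y₀, hxy, ha, hb⟩ := exists_heavy_edge hT (by rw [hcard]; omega) hns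
    have hstrict := Cval_strict hT (by rw [hcard]; omega) hxy ha hb
    -- build a star on `Fin n`
    set c₀ : Fin n := Classical.arbitrary _ with hc₀
    let S₀ : SimpleGraph (Fin n) :=
      { Adj := fun x y => (x = c₀ ∧ y ≠ c₀) ∨ (y = c₀ ∧ x ≠ c₀)
        symm := ⟨by intro x y h; tauto⟩
        loopless := ⟨by rintro x (⟨rfl, h⟩ | ⟨rfl, h⟩) <;> exact h rfl⟩ }
    have hstar : IsStarAt S₀ c₀ := fun x y => Iff.rfl
    have hS₀tree : S₀.IsTree := star_isTree hstar
    have h1 := hmin S₀ hS₀tree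
    rw [Cval_star hS₀tree hstar] at h1
    omega
  · rintro ⟨c, hc⟩ S hS
    rw [Cval_star hT hc]
    exact Cval_lower hS
end

section
/- Let T be a tree on n vertices and v a pendent (degree-one) vertex of T. For each vertex w ≠ v, let c_v(w) be the number of vertices of the subtree obtained from T by removing the branch of T at w containing v. Then Σ_{w ≠ v} c_v(w) is minimized over all trees T on n vertices with pendent vertex v exactly when T is a star centred at the neighbour of v. -/
open SimpleGraph Finset
open scoped Classical

/-- Number of vertices of the branch of `T` at `w` containing `v`, i.e. the set of
vertices joined to `v` by a walk avoiding `w`. -/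
noncomputable def branchCard {V : Type*} [Fintype V] (T : SimpleGraph V) (v w : V) : ℕ :=
  Set.ncard {u : V | ∃ p : T.Walk u v, w ∉ p.support}

/-- `c_v(w)`: number of vertices of the subtree obtained from `T` by removing the
branch of `T` at `w` containing `v`. -/
noncomputable def cvw {V : Type*} [Fintype V] (T : SimpleGraph V) (v w : V) : ℕ :=
  Fintype.card V - branchCard T v w

section Aux

variable {V : Type*}

/-- The star graph centred at `c`. -/
def starGraph (c : V) : SimpleGraph V where
  Adj x y := (x = c ∧ y ≠ c) ∨ (y = c ∧ x ≠ c)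
  symm := ⟨by intro x y h; tauto⟩
  loopless := ⟨by intro x h; rcases h with ⟨h1, h2⟩ | ⟨h1, h2⟩ <;> exact h2 h1⟩

@[simp] lemma starGraph_adj (c x y : V) :
    (_root_.starGraph c).Adj x y ↔ (x = c ∧ y ≠ c) ∨ (y = c ∧ x ≠ c) := Iff.rfl

lemma starGraph_connected [Nonempty V] (c : V) : (_root_.starGraph c).Connected := by
  rw [connected_iff]
  have hx : ∀ z, (_root_.starGraph c).Reachable z c := by
    intro z
    by_cases h : z = c
    · exact h ▸ Reachable.refl _
    · exact SimpleGraph.Adj.reachable (Or.inr ⟨rfl, h⟩)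
  exact ⟨fun x y => (hx x).trans (hx y).symm, inferInstance⟩

lemma starGraph_isAcyclic (c : V) : (_root_.starGraph c).IsAcyclic := by
  intro u p hp
  have h3 := hp.three_le_length
  cases p with
  | nil => simp at h3
  | @cons _ a _ h₁ q =>
    cases q with
    | nil => simp at h3
    | @cons _ b _ h₂ r =>
      cases r with
      | nil => simp at h3
      | @cons _ d _ h₃ s =>
        have hnd := hp.support_nodup
        simp only [Walk.support_cons, List.tail_cons, List.nodup_cons, List.mem_cons] at hnd
        push_neg at hnd
        -- hnd : (a ≠ b ∧ a ∉ s.support) ∧ (b ∉ s.support ∧ s.support.Nodup)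
        rcases h₂ with ⟨hac, hbc⟩ | ⟨hbc, hac⟩
        · -- a = c, b ≠ c
          rcases h₃ with ⟨hbc', _⟩ | ⟨hdc, _⟩
          · exact hbc hbc'
          · subst hac; subst hdc
            exact hnd.1.2 s.start_mem_support
        · -- b = c, a ≠ c
          rcases h₁ with ⟨huc, _⟩ | ⟨hac', _⟩
          · subst hbc; subst huc
            exact hnd.2.1 s.end_mem_support
          · exact hac hac'

lemma starGraph_isTree [Nonempty V] (c : V) : (_root_.starGraph c).IsTree :=
  ⟨starGraph_connected c, starGraph_isAcyclic c⟩

variable [Fintype V]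

lemma starGraph_degree {c v : V} (hvc : v ≠ c) : (_root_.starGraph c).degree v = 1 := by
  have h : (_root_.starGraph c).neighborFinset v = {c} := by
    ext y
    simp only [mem_neighborFinset, _root_.starGraph_adj, Finset.mem_singleton]
    constructor
    · rintro (⟨h1, h2⟩ | ⟨h1, h2⟩)
      · exact absurd h1 hvc
      · exact h1
    · rintro rfl; exact Or.inr ⟨rfl, hvc⟩
  rw [SimpleGraph.degree, h, Finset.card_singleton]

lemma neighbor_eq {T : SimpleGraph V} {v c : V} (hv : T.degree v = 1) (hc : T.Adj v c)
    {u : V} (hu : T.Adj v u) : u = c := by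
  obtain ⟨a, ha⟩ := Finset.card_eq_one.mp hv
  have h1 : u ∈ T.neighborFinset v := (T.mem_neighborFinset v u).mpr hu
  have h2 : c ∈ T.neighborFinset v := (T.mem_neighborFinset v c).mpr hc
  rw [ha, Finset.mem_singleton] at h1 h2
  rw [h1, h2]

omit [Fintype V] in
lemma path_length_eq_dist {T : SimpleGraph V} (hT : T.IsTree) {u v : V}
    (p : T.Walk u v) (hp : p.IsPath) : p.length = T.dist u v := by
  refine le_antisymm ?_ (SimpleGraph.dist_le p)
  obtain ⟨q, hq⟩ := hT.isConnected.exists_walk_length_eq_dist u v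
  have h1 : q.bypass = p := (hT.existsUnique_path u v).unique q.bypass_isPath hp
  calc p.length = q.bypass.length := by rw [h1]
    _ ≤ q.length := q.length_bypass_le
    _ = T.dist u v := hq

omit [Fintype V] in
lemma two_le_dist {T : SimpleGraph V} (hconn : T.Connected) {v c u : V}
    (huv : ∀ x, T.Adj v x → x = c) (hu1 : u ≠ v) (hu2 : u ≠ c) : 2 ≤ T.dist u v := by
  have h0 : T.dist u v ≠ 0 := by
    rw [SimpleGraph.dist_ne_zero_iff_ne_and_reachable]
    exact ⟨hu1, hconn u v⟩
  have h1 : T.dist u v ≠ 1 := by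
    intro h
    rw [SimpleGraph.dist_eq_one_iff_adj] at h
    exact hu2 (huv u h.symm)
  omega

lemma adj_center_of_dist_two {T : SimpleGraph V} {v c u : V} (hv : T.degree v = 1)
    (hc : T.Adj v c) (h2 : T.dist u v = 2) : T.Adj u c := by
  obtain ⟨p, hp⟩ := SimpleGraph.exists_walk_of_dist_ne_zero (by omega : T.dist u v ≠ 0)
  rw [h2] at hp
  cases p with
  | nil => simp at hp
  | cons h₁ q =>
    cases q with
    | nil => simp at hp
    | cons h₂ r =>
      cases r with
      | cons h₃ s => simp [Walk.length_cons] at hp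
      | nil =>
        have := neighbor_eq hv hc h₂.symm
        rwa [this] at h₁

/-- Key identity: `∑_{w ≠ v} c_v(w) = ∑_u dist(u,v)`. -/
lemma sum_cvw_eq_sum_dist {T : SimpleGraph V} (hT : T.IsTree) (v : V) :
    (∑ w ∈ Finset.univ.filter (· ≠ v), cvw T v w) = ∑ u, T.dist u v := by
  have hex := fun u => hT.existsUnique_path u v
  choose P hP hP' using hex
  have key : ∀ w, cvw T v w = (univ.filter fun u => w ∈ (P u).support).card := by
    intro w
    have hcompl : {u : V | ∃ p : T.Walk u v, w ∉ p.support}ᶜ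
        = {u : V | w ∈ (P u).support} := by
      ext u
      simp only [Set.mem_compl_iff, Set.mem_setOf_eq, not_exists, not_not]
      constructor
      · intro h; exact h (P u)
      · intro h p
        have hb : p.bypass = P u := hP' u p.bypass p.bypass_isPath
        exact p.support_bypass_subset (hb ▸ h)
    have h1 := Set.ncard_add_ncard_compl {u : V | ∃ p : T.Walk u v, w ∉ p.support}
    rw [hcompl, Nat.card_eq_fintype_card] at h1
    have h2 : {u : V | w ∈ (P u).support}.ncard
        = (univ.filter fun u => w ∈ (P u).support).card := by
      rw [Set.ncard_eq_toFinset_card']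
      congr 1
      ext u; simp
    rw [h2] at h1
    rw [cvw, branchCard]
    omega
  have key2 : ∀ u, (univ.filter fun w => w ≠ v ∧ w ∈ (P u).support).card = T.dist u v := by
    intro u
    have hnd := (hP u).support_nodup
    have hset : (univ.filter fun w => w ≠ v ∧ w ∈ (P u).support)
        = (P u).support.toFinset.erase v := by
      ext w
      simp [Finset.mem_erase]
    rw [hset, Finset.card_erase_of_mem (by simp [Walk.end_mem_support]),
      List.toFinset_card_of_nodup hnd, SimpleGraph.Walk.length_support,
      Nat.add_sub_cancel, path_length_eq_dist hT (P u) (hP u)]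
  calc (∑ w ∈ Finset.univ.filter (· ≠ v), cvw T v w)
      = ∑ w ∈ Finset.univ.filter (· ≠ v), ∑ u : V,
          if w ∈ (P u).support then 1 else 0 := by
        refine Finset.sum_congr rfl fun w _ => ?_
        rw [key w, Finset.card_filter]
    _ = ∑ u : V, ∑ w ∈ Finset.univ.filter (· ≠ v),
          if w ∈ (P u).support then 1 else 0 := Finset.sum_comm
    _ = ∑ u, T.dist u v := by
        refine Finset.sum_congr rfl fun u _ => ?_
        rw [← key2 u, Finset.card_filter, Finset.sum_filter]
        refine Finset.sum_congr rfl fun w _ => ?_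
        by_cases h1 : w ≠ v <;> by_cases h2 : w ∈ (P u).support <;> simp [h1, h2]

end Aux

section Main

variable {V : Type*} [Fintype V]

lemma sum_split {v c : V} (hvc : v ≠ c) (f : V → ℕ) :
    ∑ u, f u = f v + (f c + ∑ u ∈ (univ.erase v).erase c, f u) := by
  rw [← Finset.add_sum_erase _ f (mem_univ v),
      ← Finset.add_sum_erase _ f (Finset.mem_erase.mpr ⟨Ne.symm hvc, mem_univ c⟩)]

lemma card_erase_erase {v c : V} (hvc : v ≠ c) :
    ((univ.erase v).erase c).card = Fintype.card V - 2 := by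
  rw [Finset.card_erase_of_mem (Finset.mem_erase.mpr ⟨Ne.symm hvc, mem_univ c⟩),
      Finset.card_erase_of_mem (mem_univ v), Finset.card_univ]
  omega

lemma sum_dist_starGraph {c v : V} (hvc : v ≠ c) :
    ∑ u, (_root_.starGraph c).dist u v = 1 + 2 * (Fintype.card V - 2) := by
  have : Nonempty V := ⟨v⟩
  have hconn := starGraph_connected c
  have hd2 : ∀ u, u ≠ v → u ≠ c → (_root_.starGraph c).dist u v = 2 := by
    intro u huv huc
    have hle : (_root_.starGraph c).dist u v ≤ 2 := by
      have huc' : (_root_.starGraph c).Adj u c := Or.inr ⟨rfl, huc⟩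
      have hcv : (_root_.starGraph c).Adj c v := Or.inl ⟨rfl, hvc⟩
      simpa using SimpleGraph.dist_le (Walk.cons huc' (Walk.cons hcv Walk.nil))
    have hge : 2 ≤ (_root_.starGraph c).dist u v := by
      refine two_le_dist hconn (c := c) ?_ huv huc
      rintro x (⟨h1, _⟩ | ⟨h1, _⟩)
      · exact absurd h1 hvc
      · exact h1
    omega
  rw [sum_split hvc (fun u => (_root_.starGraph c).dist u v)]
  have h0 : (_root_.starGraph c).dist v v = 0 := SimpleGraph.dist_self
  have h1 : (_root_.starGraph c).dist c v = 1 :=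
    SimpleGraph.dist_eq_one_iff_adj.mpr (Or.inl ⟨rfl, hvc⟩)
  have h2 : ∑ u ∈ (univ.erase v).erase c, (_root_.starGraph c).dist u v
      = 2 * (Fintype.card V - 2) := by
    rw [Finset.sum_congr rfl (fun u hu => ?_), Finset.sum_const, smul_eq_mul,
      card_erase_erase hvc, Nat.mul_comm]
    simp only [Finset.mem_erase] at hu
    exact hd2 u hu.2.1 hu.1
  rw [h0, h1, h2]
  omega

lemma le_sum_dist {T : SimpleGraph V} (hT : T.IsTree) {v c : V} (hv : T.degree v = 1)
    (hc : T.Adj v c) :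
    1 + 2 * (Fintype.card V - 2) ≤ ∑ u, T.dist u v := by
  have hvc : v ≠ c := hc.ne
  rw [sum_split hvc (fun u => T.dist u v)]
  have h1 : T.dist c v = 1 := SimpleGraph.dist_eq_one_iff_adj.mpr hc.symm
  have h2 : 2 * (Fintype.card V - 2) ≤ ∑ u ∈ (univ.erase v).erase c, T.dist u v := by
    rw [← card_erase_erase hvc, Nat.mul_comm, ← smul_eq_mul]
    refine Finset.card_nsmul_le_sum _ _ _ fun u hu => ?_
    simp only [Finset.mem_erase] at hu
    exact two_le_dist hT.isConnected (fun x hx => neighbor_eq hv hc hx) hu.2.1 hu.1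
  omega

end Main


/-- for trees `T` with pendent vertex `v`, the quantity
`∑_{w ≠ v} c_v(w)` is minimized exactly when `T` is a star centred at the
neighbour of `v`. -/
theorem sum_cvw_min_iff_star {V : Type*} [Fintype V] (v : V) (T : SimpleGraph V)
    (hT : T.IsTree) (hv : T.degree v = 1) :
    (∀ T' : SimpleGraph V, T'.IsTree → T'.degree v = 1 →
        (∑ w ∈ Finset.univ.filter (· ≠ v), cvw T v w) ≤
          ∑ w ∈ Finset.univ.filter (· ≠ v), cvw T' v w) ↔
      ∃ c, T.Adj v c ∧ IsStarAt T c := by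
  classical
  obtain ⟨c, hc⟩ : ∃ c, T.Adj v c := by
    obtain ⟨a, ha⟩ := Finset.card_eq_one.mp hv
    exact ⟨a, (T.mem_neighborFinset v a).mp (ha ▸ Finset.mem_singleton_self a)⟩
  have hvc : v ≠ c := hc.ne
  have : Nonempty V := ⟨v⟩
  constructor
  · intro hmin
    have h1 := hmin (_root_.starGraph c) (starGraph_isTree c) (starGraph_degree hvc)
    rw [sum_cvw_eq_sum_dist hT v, sum_cvw_eq_sum_dist (starGraph_isTree c) v,
      sum_dist_starGraph hvc] at h1
    -- h1 : ∑ u, T.dist u v ≤ 1 + 2 * (card V - 2)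
    rw [sum_split hvc (fun u => T.dist u v), SimpleGraph.dist_self,
      SimpleGraph.dist_eq_one_iff_adj.mpr hc.symm] at h1
    have hsle : ∑ u ∈ (univ.erase v).erase c, T.dist u v ≤ 2 * (Fintype.card V - 2) := by
      omega
    have hall : ∀ u ∈ (univ.erase v).erase c, T.dist u v = 2 := by
      by_contra hcon
      push_neg at hcon
      obtain ⟨u, hu, hu2⟩ := hcon
      have hge : ∀ x ∈ (univ.erase v).erase c, 2 ≤ T.dist x v := fun x hx => by
        simp only [Finset.mem_erase] at hx
        exact two_le_dist hT.isConnected (fun y hy => neighbor_eq hv hc hy) hx.2.1 hx.1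
      have hlt : (∑ _x ∈ (univ.erase v).erase c, 2)
          < ∑ u ∈ (univ.erase v).erase c, T.dist u v :=
        Finset.sum_lt_sum hge ⟨u, hu, lt_of_le_of_ne (hge u hu) (Ne.symm hu2)⟩
      rw [Finset.sum_const, smul_eq_mul, card_erase_erase hvc, Nat.mul_comm] at hlt
      omega
    have hadj : ∀ u, u ≠ v → u ≠ c → T.Adj u c := by
      intro u huv huc
      refine adj_center_of_dist_two hv hc (hall u ?_)
      exact Finset.mem_erase.mpr ⟨huc, Finset.mem_erase.mpr ⟨huv, mem_univ u⟩⟩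
    refine ⟨c, hc, fun x y => ⟨fun h => ?_, fun h => ?_⟩⟩
    · by_cases hx : x = c
      · refine Or.inl ⟨hx, fun hy => ?_⟩
        subst hx; subst hy
        exact T.loopless.irrefl _ h
      by_cases hy : y = c
      · exact Or.inr ⟨hy, hx⟩
      exfalso
      by_cases hxv : x = v
      · exact hy (neighbor_eq hv hc (hxv ▸ h))
      by_cases hyv : y = v
      · exact hx (neighbor_eq hv hc (hyv ▸ h.symm))
      -- two distinct paths from x to y
      have hax : T.Adj x c := hadj x hxv hx
      have hay : T.Adj y c := hadj y hyv hy
      have hp1 : (Walk.cons h Walk.nil : T.Walk x y).IsPath := by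
        simp [Walk.isPath_def, h.ne]
      have hp2 : (Walk.cons hax (Walk.cons hay.symm Walk.nil) : T.Walk x y).IsPath := by
        have hcy : c ≠ y := fun hcy => hy hcy.symm
        simp [Walk.isPath_def, hx, h.ne, hcy]
      have := (hT.existsUnique_path x y).unique hp1 hp2
      have hlen := congrArg Walk.length this
      simp at hlen
    · rcases h with ⟨rfl, hy⟩ | ⟨rfl, hx⟩
      · by_cases hyv : y = v
        · exact hyv ▸ hc.symm
        · exact (hadj y hyv hy).symm
      · by_cases hxv : x = v
        · exact hxv ▸ hc
        · exact hadj x hxv hx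
  · rintro ⟨c', hc', hstar⟩ T' hT' hv'
    have hvc' : v ≠ c' := hc'.ne
    have hTeq : T = _root_.starGraph c' := by
      ext x y
      exact (hstar x y).trans (_root_.starGraph_adj c' x y).symm
    obtain ⟨c'', hc''⟩ : ∃ c'', T'.Adj v c'' := by
      obtain ⟨a, ha⟩ := Finset.card_eq_one.mp hv'
      exact ⟨a, (T'.mem_neighborFinset v a).mp (ha ▸ Finset.mem_singleton_self a)⟩
    rw [sum_cvw_eq_sum_dist hT v, sum_cvw_eq_sum_dist hT' v, hTeq,
      sum_dist_starGraph hvc']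
    exact le_sum_dist hT' hv' hc''
end
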